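/- The relations ≤₁ and ≤₂ are partial orderings of Ord (reflexive, antisymmetric and transitive); ≤₁ respects ≤ (that is, α ≤₁ β implies α ≤ β, and if α ≤ β ≤ γ and α ≤₁ γ then α ≤₁ β); and ≤₂ respects ≤₁ (that is, α ≤₂ β implies α ≤₁ β, and if α ≤₁ β ≤₁ γ and α ≤₂ γ then α ≤₂ β). -/

import Mathlib

open Ordinal Set

/-- `ρ` is additively indecomposable: nonzero and closed under addition. -/
def AddIndec (ρ : Ordinal) : Prop :=
  ρ ≠ 0 ∧ ∀ ξ < ρ, ∀ η < ρ, ξ + η < ρ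

/-- `σ` is divisible by `ρ`, i.e. of the form `ρ·ζ`. -/
def DivBy (ρ σ : Ordinal) : Prop := ∃ ζ : Ordinal, σ = ρ * ζ

/-- The function `f_ξ` of the structure `R^ρ`. -/
noncomputable def fApp (ρ ξ α : Ordinal) : Ordinal :=
  if α % ρ = 0 then α + ξ else ρ * (α / ρ)

/-- A set of ordinals is closed (with respect to `R^ρ`). -/
def RClosed (ρ : Ordinal) (X : Set Ordinal) : Prop :=
  ∀ σ ξ : Ordinal, DivBy ρ σ → ξ < ρ → σ + ξ ∈ X → σ ∈ X

/-- `h` is an embedding of `X` (as a substructure of `R^ρ`) into `R^ρ`. -/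
def IsEmbed (ρ : Ordinal) (X : Set Ordinal) (h : Ordinal → Ordinal) : Prop :=
  (∀ α ∈ X, ∀ β ∈ X, α < β → h α < h β) ∧
  (∀ α ∈ X, ∀ β ∈ X, ∀ ξ, ξ < ρ → (fApp ρ ξ α = β ↔ fApp ρ ξ (h α) = h β))

/-- `Y` is a covering of `Z` (relative to relations `le1`, `le2`). -/
def IsCovering (ρ : Ordinal) (le1 le2 : Ordinal → Ordinal → Prop)
    (Z Y : Set Ordinal) : Prop :=
  ∃ h : Ordinal → Ordinal, IsEmbed ρ Z h ∧
    (∀ σ ∈ Z, ∀ τ ∈ Z, (le1 σ τ → le1 (h σ) (h τ)) ∧ (le2 σ τ → le2 (h σ) (h τ))) ∧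
    h '' Z = Y

/-- The `i`-th element of a finite set of ordinals, in increasing order. -/
noncomputable def nth (Y : Finset Ordinal) (i : ℕ) : Ordinal :=
  (Y.sort (· ≤ ·)).getD i 0

/-- There are cofinally many finite sets `Ỹ` below `α` with property `P`. -/
def Cofinally (α : Ordinal) (P : Finset Ordinal → Prop) : Prop :=
  ∀ α' < α, ∃ Yt : Finset Ordinal, (∀ y ∈ Yt, α' < y ∧ y < α) ∧ P Yt

/-- The defining condition for `α ≤₁ β`. -/
def Le1Def (ρ : Ordinal) (le1 le2 : Ordinal → Ordinal → Prop) (α β : Ordinal) : Prop :=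
  α ≤ β ∧
  ∀ X Y : Finset Ordinal, (∀ x ∈ X, x < α) → (∀ y ∈ Y, α ≤ y ∧ y < β) →
    RClosed ρ (↑(X ∪ Y) : Set Ordinal) →
    ∃ Yt : Finset Ordinal, (∀ y ∈ Yt, y < α) ∧ (∀ x ∈ X, ∀ y ∈ Yt, x < y) ∧
      IsCovering ρ le1 le2 (↑(X ∪ Y) : Set Ordinal) (↑(X ∪ Yt) : Set Ordinal)

/-- The defining condition for `α ≤₂ β`. -/
def Le2Def (ρ : Ordinal) (le1 le2 : Ordinal → Ordinal → Prop) (α β : Ordinal) : Prop :=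
  α ≤ β ∧
  (∀ X Y : Finset Ordinal, (∀ x ∈ X, x < α) → (∀ y ∈ Y, y < α) →
    RClosed ρ (↑X : Set Ordinal) → RClosed ρ (↑Y : Set Ordinal) →
    (∀ x ∈ X, ∀ y ∈ Y, x < y) →
    Cofinally α (fun Yt => IsCovering ρ le1 le2 (↑(X ∪ Y) : Set Ordinal) (↑(X ∪ Yt) : Set Ordinal)) →
    Cofinally β (fun Yt => IsCovering ρ le1 le2 (↑(X ∪ Y) : Set Ordinal) (↑(X ∪ Yt) : Set Ordinal))) ∧
  (∀ X Y : Finset Ordinal, (∀ x ∈ X, x < α) → (∀ y ∈ Y, α ≤ y ∧ y < β) →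
    RClosed ρ (↑(X ∪ Y) : Set Ordinal) →
    ∃ Yt : Finset Ordinal, (∀ y ∈ Yt, y < α) ∧ (∀ x ∈ X, ∀ y ∈ Yt, x < y) ∧
      IsCovering ρ le1 le2 (↑(X ∪ Y) : Set Ordinal) (↑(X ∪ Yt) : Set Ordinal) ∧
      ∀ i : ℕ, i < Y.card → le1 (nth Y i) β → le1 (nth Yt i) α)

/-- `le1`, `le2` satisfy the recursive definitions of `≤₁` and `≤₂` of `R₂^ρ`. -/
def R2System (ρ : Ordinal) (le1 le2 : Ordinal → Ordinal → Prop) : Prop :=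
  (∀ α β, le1 α β ↔ Le1Def ρ le1 le2 α β) ∧
  (∀ α β, le2 α β ↔ Le2Def ρ le1 le2 α β)

/-- Isomorphism of two classes of ordinals as substructures of `R₂^ρ`. -/
def OrdIso (ρ : Ordinal) (le1 le2 : Ordinal → Ordinal → Prop) (A B : Set Ordinal) : Prop :=
  ∃ g : Ordinal → Ordinal, Set.BijOn g A B ∧
    (∀ σ ∈ A, ∀ τ ∈ A, (σ < τ ↔ g σ < g τ)) ∧
    (∀ σ ∈ A, ∀ τ ∈ A, ∀ ξ, ξ < ρ → (fApp ρ ξ σ = τ ↔ fApp ρ ξ (g σ) = g τ)) ∧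
    (∀ σ ∈ A, ∀ τ ∈ A, (le1 σ τ ↔ le1 (g σ) (g τ)) ∧ (le2 σ τ ↔ le2 (g σ) (g τ)))

/-- `κ` is `≤₁`-minimal. -/
def Min1 (le1 : Ordinal → Ordinal → Prop) (κ : Ordinal) : Prop :=
  ∀ ξ < κ, ¬ le1 ξ κ

/-- `(dom, f)` is the increasing enumeration of the class `S` of ordinals:
`dom` is a downward-closed class of indices and `f` restricted to `dom` is the
order isomorphism onto `S`. -/
def Enumerates (S : Set Ordinal) (dom : Ordinal → Prop) (f : Ordinal → Ordinal) : Prop :=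
  (∀ a b : Ordinal, dom a → b < a → dom b) ∧
  (∀ a b : Ordinal, dom b → a < b → f a < f b) ∧
  (∀ a : Ordinal, dom a → f a ∈ S) ∧
  (∀ x ∈ S, ∃ a, dom a ∧ f a = x)

/-- `l` is a limit point of the class `C` of ordinals. -/
def LimPt (C : Set Ordinal) (l : Ordinal) : Prop :=
  l ≠ 0 ∧ ∀ γ < l, ∃ δ ∈ C, γ < δ ∧ δ < l

/-- The class `C` of ordinals is topologically closed. -/
def TopClosed (C : Set Ordinal) : Prop := ∀ l, LimPt C l → l ∈ C

/-- The class `C` of ordinals is an interval. -/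
def IsInterval (C : Set Ordinal) : Prop :=
  ∀ σ τ υ : Ordinal, σ ∈ C → υ ∈ C → σ ≤ τ → τ ≤ υ → τ ∈ C

open Classical in
/-- The closure `J̄_ξ` of the `ξ`-th component of `I_α` with respect to `≤₂`,
given the enumeration `(dom₂, ν)` of the `≤₂`-minimal multiples of `κ_α` in `I_α`. -/
noncomputable def Jbar (le1 : Ordinal → Ordinal → Prop) (κα : Ordinal)
    (dom₂ : Ordinal → Prop) (ν : Ordinal → Ordinal) (ξ : Ordinal) : Set Ordinal :=
  if dom₂ (ξ + 1) then Set.Icc (ν ξ) (ν (ξ + 1))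
  else {δ | le1 κα δ} ∩ Set.Ici (ν ξ)

/- ## order / arithmetic helpers -/

section Arith
variable {ρ : Ordinal}

lemma mod_mul_add (hρ : ρ ≠ 0) {ξ : Ordinal} (hξ : ξ < ρ) (v : Ordinal) :
    (ρ * v + ξ) % ρ = ξ := by
  rw [Ordinal.mul_add_mod_self, Ordinal.mod_eq_of_lt hξ]

lemma div_mul_add (hρ : ρ ≠ 0) {ξ : Ordinal} (hξ : ξ < ρ) (v : Ordinal) :
    (ρ * v + ξ) / ρ = v := by
  rw [Ordinal.mul_add_div _ hρ, Ordinal.div_eq_zero_of_lt hξ, add_zero]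

lemma fApp_zero_self (hρ : ρ ≠ 0) (α : Ordinal) :
    fApp ρ 0 α = α ↔ α % ρ = 0 := by
  unfold fApp
  rcases eq_or_ne (α % ρ) 0 with h | h
  · simp [h]
  · simp only [h, if_neg h, iff_false]
    intro hc
    have h1 : ρ * (α / ρ) + α % ρ = α := Ordinal.div_add_mod α ρ
    have : ρ * (α / ρ) < α := by
      calc ρ * (α / ρ) = ρ * (α / ρ) + 0 := (add_zero _).symm
      _ < ρ * (α / ρ) + α % ρ := (add_lt_add_iff_left _).2 (pos_iff_ne_zero.2 h)
      _ = α := h1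
    exact absurd hc this.ne
end Arith

section Embed
variable {ρ : Ordinal} {Z : Set Ordinal} {h : Ordinal → Ordinal}

lemma embed_mod_zero (hρ : AddIndec ρ) (emb : IsEmbed ρ Z h) {α : Ordinal}
    (hα : α ∈ Z) : α % ρ = 0 ↔ (h α) % ρ = 0 := by
  have h0 : (0 : Ordinal) < ρ := pos_iff_ne_zero.2 hρ.1
  rw [← fApp_zero_self hρ.1 α, ← fApp_zero_self hρ.1 (h α)]
  exact emb.2 α hα α hα 0 h0

lemma embed_split (hρ : AddIndec ρ) (hZ : RClosed ρ Z) (emb : IsEmbed ρ Z h)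
    {α : Ordinal} (hα : α ∈ Z) (hmod : α % ρ ≠ 0) :
    ρ * (α / ρ) ∈ Z ∧ h α = h (ρ * (α / ρ)) + α % ρ ∧ (h (ρ * (α / ρ))) % ρ = 0 := by
  have hltρ : α % ρ < ρ := Ordinal.mod_lt α hρ.1
  have hdm : ρ * (α / ρ) + α % ρ = α := Ordinal.div_add_mod α ρ
  have hβZ : ρ * (α / ρ) ∈ Z := hZ _ (α % ρ) ⟨_, rfl⟩ hltρ (by rw [hdm]; exact hα)
  have hβ0 : (ρ * (α / ρ)) % ρ = 0 := Ordinal.mul_mod ρ (α / ρ)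
  have hhβ0 : (h (ρ * (α / ρ))) % ρ = 0 := (embed_mod_zero hρ emb hβZ).1 hβ0
  have hf : fApp ρ (α % ρ) (ρ * (α / ρ)) = α := by
    unfold fApp; rw [if_pos hβ0, hdm]
  have := (emb.2 _ hβZ α hα (α % ρ) hltρ).1 hf
  unfold fApp at this
  rw [if_pos hhβ0] at this
  exact ⟨hβZ, this.symm, hhβ0⟩

lemma closed_image (hρ : AddIndec ρ) (hZ : RClosed ρ Z) (emb : IsEmbed ρ Z h) :
    RClosed ρ (h '' Z) := by
  rintro σ ξ ⟨u, rfl⟩ hξ ⟨α, hα, heq⟩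
  rcases eq_or_ne ξ 0 with rfl | hξ0
  · rw [add_zero] at heq; exact ⟨α, hα, heq⟩
  · have hmodh : (h α) % ρ = ξ := by rw [heq, mod_mul_add hρ.1 hξ]
    have hmod : α % ρ ≠ 0 := by
      intro h0
      exact hξ0 (by rw [← hmodh, ← (embed_mod_zero hρ emb hα).1 h0])
    obtain ⟨hβZ, hsplit, hβ0⟩ := embed_split hρ hZ emb hα hmod
    have hb : h (ρ * (α / ρ)) = ρ * ((h (ρ * (α / ρ))) / ρ) := by
      conv_lhs => rw [← Ordinal.div_add_mod (h (ρ * (α / ρ))) ρ]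
      rw [hβ0, add_zero]
    have hmρ : α % ρ < ρ := Ordinal.mod_lt α hρ.1
    have key : ρ * u = h (ρ * (α / ρ)) := by
      have h2 : ρ * u + ξ = ρ * ((h (ρ * (α / ρ))) / ρ) + α % ρ := by
        rw [← heq, hsplit, ← hb]
      have h3 : u = (h (ρ * (α / ρ))) / ρ := by
        have := congrArg (· / ρ) h2
        simpa [div_mul_add hρ.1 hξ, div_mul_add hρ.1 hmρ] using this
      rw [h3, ← hb]
    exact ⟨ρ * (α / ρ), hβZ, key.symm⟩

lemma rclosed_union {S T : Set Ordinal} (hS : RClosed ρ S) (hT : RClosed ρ T) :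
    RClosed ρ (S ∪ T) := by
  rintro σ ξ hdiv hξ (hin | hin)
  · exact Or.inl (hS σ ξ hdiv hξ hin)
  · exact Or.inr (hT σ ξ hdiv hξ hin)

lemma rclosed_insert_pair (hρ : AddIndec ρ) {S : Set Ordinal} (hS : RClosed ρ S)
    (δ : Ordinal) : RClosed ρ (S ∪ {ρ * (δ / ρ), δ}) := by
  rintro σ ξ ⟨u, rfl⟩ hξ (hin | hin)
  · exact Or.inl (hS _ ξ ⟨u, rfl⟩ hξ hin)
  · rcases hin with hin | hin
    · rcases eq_or_ne ξ 0 with rfl | hξ0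
      · rw [add_zero] at hin; exact Or.inr (Or.inl hin)
      · exfalso
        have : (ρ * u + ξ) % ρ = 0 := by
          rw [hin]; exact Ordinal.mul_mod ρ (δ / ρ)
        rw [mod_mul_add hρ.1 hξ] at this; exact hξ0 this
    · -- ρ * u + ξ = δ
      have h1 : δ / ρ = u := by rw [← hin, div_mul_add hρ.1 hξ]
      exact Or.inr (Or.inl (by rw [h1]))

end Embed

/- ## sorted list machinery -/

section Lists

local instance : IsAntisymm Ordinal (· < ·) :=
  ⟨fun a b h h' => absurd h' (asymm h)⟩

lemma toFinset_map_list (l : List Ordinal) (f : Ordinal → Ordinal) :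
    (l.map f).toFinset = l.toFinset.image f := by
  ext x; simp

lemma sorted_lt_map {l : List Ordinal} {h : Ordinal → Ordinal}
    (hs : l.Pairwise (· < ·))
    (mono : ∀ a ∈ l, ∀ b ∈ l, a < b → h a < h b) :
    (l.map h).Pairwise (· < ·) := by
  rw [List.pairwise_map]
  exact List.Pairwise.imp_of_mem (fun ha hb hab => mono _ ha _ hb hab) hs

lemma eq_of_sorted_lt_toFinset_eq {l₁ l₂ : List Ordinal}
    (h₁ : l₁.Pairwise (· < ·)) (h₂ : l₂.Pairwise (· < ·))
    (he : l₁.toFinset = l₂.toFinset) : l₁ = l₂ := by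
  have n₁ : l₁.Nodup := h₁.imp ne_of_lt
  have n₂ : l₂.Nodup := h₂.imp ne_of_lt
  exact List.Perm.eq_of_pairwise' h₁ h₂ (List.perm_of_nodup_nodup_toFinset_eq n₁ n₂ he)

lemma sort_union {X Y : Finset Ordinal} (hXY : ∀ x ∈ X, ∀ y ∈ Y, x < y) :
    (X ∪ Y).sort (· ≤ ·) = X.sort (· ≤ ·) ++ Y.sort (· ≤ ·) := by
  apply eq_of_sorted_lt_toFinset_eq ((Finset.sortedLT_sort _).pairwise)
  · rw [List.pairwise_append]
    exact ⟨(Finset.sortedLT_sort _).pairwise, (Finset.sortedLT_sort _).pairwise,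
      fun a ha b hb => hXY a (Finset.mem_sort _ |>.1 ha) b (Finset.mem_sort _ |>.1 hb)⟩
  · rw [List.toFinset_append, Finset.sort_toFinset, Finset.sort_toFinset,
      Finset.sort_toFinset]

lemma card_union_of_lt {X Y : Finset Ordinal} (hXY : ∀ x ∈ X, ∀ y ∈ Y, x < y) :
    (X ∪ Y).card = X.card + Y.card := by
  rw [Finset.card_union_of_disjoint]
  rw [Finset.disjoint_left]
  intro a ha hb
  exact lt_irrefl a (hXY a ha a hb)

lemma nth_union_left {X Y : Finset Ordinal} (hXY : ∀ x ∈ X, ∀ y ∈ Y, x < y)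
    {i : ℕ} (hi : i < X.card) : nth (X ∪ Y) i = nth X i := by
  unfold nth
  rw [sort_union hXY, List.getD_append]
  rwa [Finset.length_sort]

lemma nth_union_right {X Y : Finset Ordinal} (hXY : ∀ x ∈ X, ∀ y ∈ Y, x < y)
    {i : ℕ} (hi : X.card ≤ i) : nth (X ∪ Y) i = nth Y (i - X.card) := by
  unfold nth
  rw [sort_union hXY, List.getD_append_right, Finset.length_sort]
  rwa [Finset.length_sort]

lemma map_eq_self_forall {h : Ordinal → Ordinal} :
    ∀ {l : List Ordinal}, l.map h = l → ∀ x ∈ l, h x = x := by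
  intro l
  induction l with
  | nil => intro _ x hx; simp at hx
  | cons a l ih =>
    intro hmap x hx
    rw [List.map_cons, List.cons.injEq] at hmap
    rcases List.mem_cons.1 hx with rfl | hx
    · exact hmap.1
    · exact ih hmap.2 x hx

/-- Lemma C: a covering map fixes the common prefix `X` and maps `Y` to `Yt`
elementwise in order. -/
lemma cover_map_structure {X Y Yt : Finset Ordinal} {h : Ordinal → Ordinal}
    (mono : ∀ a ∈ (↑(X ∪ Y) : Set Ordinal), ∀ b ∈ (↑(X ∪ Y) : Set Ordinal), a < b → h a < h b)
    (img : h '' (↑(X ∪ Y) : Set Ordinal) = (↑(X ∪ Yt) : Set Ordinal))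
    (hXY : ∀ x ∈ X, ∀ y ∈ Y, x < y) (hXYt : ∀ x ∈ X, ∀ y ∈ Yt, x < y) :
    (∀ x ∈ X, h x = x) ∧ Yt.card = Y.card ∧
      (∀ i < Y.card, h (nth Y i) = nth Yt i) := by
  have key : ((X ∪ Y).sort (· ≤ ·)).map h = (X ∪ Yt).sort (· ≤ ·) := by
    apply eq_of_sorted_lt_toFinset_eq
    · exact sorted_lt_map ((Finset.sortedLT_sort _).pairwise)
        (fun a ha b hb => mono a (by simpa using (Finset.mem_sort _ |>.1 ha))
          b (by simpa using (Finset.mem_sort _ |>.1 hb)))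
    · exact (Finset.sortedLT_sort _).pairwise
    · rw [toFinset_map_list, Finset.sort_toFinset, Finset.sort_toFinset]
      apply Finset.coe_injective
      rw [Finset.coe_image, img]
  rw [sort_union hXY, sort_union hXYt, List.map_append] at key
  have hlen : ((X.sort (· ≤ ·)).map h).length = (X.sort (· ≤ ·)).length := by
    rw [List.length_map]
  obtain ⟨keyX, keyY⟩ := List.append_inj key hlen
  refine ⟨fun x hx => map_eq_self_forall keyX x ((Finset.mem_sort _).2 hx), ?_, ?_⟩
  · have := congrArg List.length keyY
    rw [List.length_map, Finset.length_sort, Finset.length_sort] at this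
    exact this.symm
  · intro i hi
    unfold nth
    rw [← keyY]
    rw [List.getD_eq_getElem _ _ (by rwa [Finset.length_sort]),
      List.getD_eq_getElem _ _ (by rwa [List.length_map, Finset.length_sort]),
      List.getElem_map]

end Lists


/- ## covering basics -/

section Cov
variable {ρ : Ordinal} {le1 le2 : Ordinal → Ordinal → Prop}

lemma covering_id (Z : Set Ordinal) : IsCovering ρ le1 le2 Z Z := by
  refine ⟨id, ⟨fun α _ β _ h => h, fun α _ β _ ξ _ => Iff.rfl⟩,
    fun σ _ τ _ => ⟨id, id⟩, Set.image_id Z⟩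

lemma covering_trans {Z₁ Z₂ Z₃ : Set Ordinal}
    (h12 : IsCovering ρ le1 le2 Z₁ Z₂) (h23 : IsCovering ρ le1 le2 Z₂ Z₃) :
    IsCovering ρ le1 le2 Z₁ Z₃ := by
  obtain ⟨h, emb, pres, img⟩ := h12
  obtain ⟨h', emb', pres', img'⟩ := h23
  have hmem : ∀ α ∈ Z₁, h α ∈ Z₂ := fun α hα => img ▸ ⟨α, hα, rfl⟩
  refine ⟨h' ∘ h, ⟨?_, ?_⟩, ?_, ?_⟩
  · exact fun α hα β hβ hab => emb'.1 _ (hmem α hα) _ (hmem β hβ) (emb.1 α hα β hβ hab)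
  · intro α hα β hβ ξ hξ
    exact (emb.2 α hα β hβ ξ hξ).trans (emb'.2 _ (hmem α hα) _ (hmem β hβ) ξ hξ)
  · intro σ hσ τ hτ
    refine ⟨fun hl => (pres' _ (hmem σ hσ) _ (hmem τ hτ)).1 ((pres σ hσ τ hτ).1 hl),
      fun hl => (pres' _ (hmem σ hσ) _ (hmem τ hτ)).2 ((pres σ hσ τ hτ).2 hl)⟩
  · rw [Set.image_comp, img, img']

lemma covering_subset {Z Z' W : Set Ordinal} {h : Ordinal → Ordinal}
    (hsub : Z ⊆ Z') (emb : IsEmbed ρ Z' h)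
    (pres : ∀ σ ∈ Z', ∀ τ ∈ Z', (le1 σ τ → le1 (h σ) (h τ)) ∧ (le2 σ τ → le2 (h σ) (h τ)))
    (himg : h '' Z = W) : IsCovering ρ le1 le2 Z W := by
  refine ⟨h, ⟨fun α hα β hβ => emb.1 α (hsub hα) β (hsub hβ),
    fun α hα β hβ ξ hξ => emb.2 α (hsub hα) β (hsub hβ) ξ hξ⟩,
    fun σ hσ τ hτ => pres σ (hsub hσ) τ (hsub hτ), himg⟩

end Cov

/- ## basic relation lemmas -/

section Rel
variable {ρ : Ordinal} {le1 le2 : Ordinal → Ordinal → Prop}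
variable (hρ : AddIndec ρ) (hsys : R2System ρ le1 le2)
include hsys

lemma le1_le {a b : Ordinal} (h : le1 a b) : a ≤ b :=
  ((hsys.1 a b).1 h).1

lemma le2_le1 {a b : Ordinal} (h : le2 a b) : le1 a b := by
  obtain ⟨hle, _, hii⟩ := (hsys.2 a b).1 h
  refine (hsys.1 a b).2 ⟨hle, fun X Y hX hY hcl => ?_⟩
  obtain ⟨Yt, h1, h2, h3, _⟩ := hii X Y hX hY hcl
  exact ⟨Yt, h1, h2, h3⟩

lemma le2_le {a b : Ordinal} (h : le2 a b) : a ≤ b := le1_le hsys (le2_le1 hsys h)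

lemma le1_refl (a : Ordinal) : le1 a a := by
  refine (hsys.1 a a).2 ⟨le_rfl, fun X Y hX hY hcl => ?_⟩
  have hYe : Y = ∅ := by
    rcases Finset.eq_empty_or_nonempty Y with h | ⟨y, hy⟩
    · exact h
    · exact absurd ((hY y hy).2) (not_lt.2 (hY y hy).1)
  subst hYe
  exact ⟨∅, by simp, by simp, covering_id _⟩

lemma le2_refl (a : Ordinal) : le2 a a := by
  refine (hsys.2 a a).2 ⟨le_rfl, fun X Y _ _ _ _ _ hcof => hcof, fun X Y hX hY hcl => ?_⟩
  have hYe : Y = ∅ := by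
    rcases Finset.eq_empty_or_nonempty Y with h | ⟨y, hy⟩
    · exact h
    · exact absurd ((hY y hy).2) (not_lt.2 (hY y hy).1)
  subst hYe
  exact ⟨∅, by simp, by simp, covering_id _, by simp⟩

lemma le1_antisymm {a b : Ordinal} (h1 : le1 a b) (h2 : le1 b a) : a = b :=
  le_antisymm (le1_le hsys h1) (le1_le hsys h2)

lemma le2_antisymm {a b : Ordinal} (h1 : le2 a b) (h2 : le2 b a) : a = b :=
  le_antisymm (le2_le hsys h1) (le2_le hsys h2)

lemma le1_resp_le {a b c : Ordinal} (hab : a ≤ b) (hbc : b ≤ c) (h : le1 a c) :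
    le1 a b := by
  obtain ⟨_, hcov⟩ := (hsys.1 a c).1 h
  refine (hsys.1 a b).2 ⟨hab, fun X Y hX hY hcl => ?_⟩
  exact hcov X Y hX (fun y hy => ⟨(hY y hy).1, lt_of_lt_of_le (hY y hy).2 hbc⟩) hcl

end Rel

section Trans
variable {ρ : Ordinal} {le1 le2 : Ordinal → Ordinal → Prop}
variable (hρ : AddIndec ρ) (hsys : R2System ρ le1 le2)
include hρ hsys

lemma le1_trans {a b c : Ordinal} (hab : le1 a b) (hbc : le1 b c) : le1 a c := by
  classical
  obtain ⟨hab', hcovab⟩ := (hsys.1 a b).1 hab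
  obtain ⟨hbc', hcovbc⟩ := (hsys.1 b c).1 hbc
  refine (hsys.1 a c).2 ⟨hab'.trans hbc', fun X Y hX hY hcl => ?_⟩
  set Y₁ := Y.filter (fun y => y < b) with hY₁def
  set Y₂ := Y.filter (fun y => ¬ y < b) with hY₂def
  have hYsplit : Y₁ ∪ Y₂ = Y := Finset.filter_union_filter_not_eq _ Y
  have e1 : (X ∪ Y₁) ∪ Y₂ = X ∪ Y := by rw [Finset.union_assoc, hYsplit]
  have hcl1 : RClosed ρ (↑((X ∪ Y₁) ∪ Y₂) : Set Ordinal) := by rw [e1]; exact hcl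
  have hXY₁ : ∀ x ∈ X ∪ Y₁, x < b := by
    intro x hx
    rcases Finset.mem_union.1 hx with hx | hx
    · exact lt_of_lt_of_le (hX x hx) hab'
    · exact (Finset.mem_filter.1 hx).2
  have hY₂c : ∀ y ∈ Y₂, b ≤ y ∧ y < c := by
    intro y hy
    exact ⟨not_lt.1 (Finset.mem_filter.1 hy).2, (hY y (Finset.mem_filter.1 hy).1).2⟩
  obtain ⟨Yt2, hYt2b, hXY₁lt, hcov1⟩ := hcovbc (X ∪ Y₁) Y₂ hXY₁ hY₂c hcl1
  have hclim : RClosed ρ (↑((X ∪ Y₁) ∪ Yt2) : Set Ordinal) := by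
    obtain ⟨h, emb, _, img⟩ := hcov1
    rw [← img]; exact closed_image hρ hcl1 emb
  set V := (Y₁ ∪ Yt2).filter (fun v => v < a) with hVdef
  set W := (Y₁ ∪ Yt2).filter (fun v => ¬ v < a) with hWdef
  have hVW : V ∪ W = Y₁ ∪ Yt2 := Finset.filter_union_filter_not_eq _ _
  have hset : (X ∪ V) ∪ W = (X ∪ Y₁) ∪ Yt2 := by
    rw [Finset.union_assoc, hVW, Finset.union_assoc]
  have hcl2 : RClosed ρ (↑((X ∪ V) ∪ W) : Set Ordinal) := by rw [hset]; exact hclim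
  have hXV : ∀ x ∈ X ∪ V, x < a := by
    intro x hx
    rcases Finset.mem_union.1 hx with hx | hx
    · exact hX x hx
    · exact (Finset.mem_filter.1 hx).2
  have hY₁b : ∀ y ∈ Y₁ ∪ Yt2, y < b := by
    intro y hy
    rcases Finset.mem_union.1 hy with hy | hy
    · exact (Finset.mem_filter.1 hy).2
    · exact hYt2b y hy
  have hWc : ∀ w ∈ W, a ≤ w ∧ w < b := by
    intro w hw
    exact ⟨not_lt.1 (Finset.mem_filter.1 hw).2, hY₁b w (Finset.mem_filter.1 hw).1⟩
  obtain ⟨Yt3, hYt3a, hXVlt, hcov2⟩ := hcovab (X ∪ V) W hXV hWc hcl2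
  refine ⟨V ∪ Yt3, ?_, ?_, ?_⟩
  · intro y hy
    rcases Finset.mem_union.1 hy with hy | hy
    · exact (Finset.mem_filter.1 hy).2
    · exact hYt3a y hy
  · intro x hx y hy
    rcases Finset.mem_union.1 hy with hy | hy
    · rcases Finset.mem_union.1 (Finset.mem_filter.1 hy).1 with hy' | hy'
      · exact lt_of_lt_of_le (hX x hx) (hY _ (Finset.mem_filter.1 hy').1).1
      · exact hXY₁lt x (Finset.mem_union_left _ hx) y hy'
    · exact hXVlt x (Finset.mem_union_left _ hx) y hy
  · have c1 : IsCovering ρ le1 le2 (↑(X ∪ Y) : Set Ordinal) (↑((X ∪ V) ∪ W) : Set Ordinal) := by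
      rw [hset]; rw [← e1]; exact hcov1
    have e3 : (X ∪ V) ∪ Yt3 = X ∪ (V ∪ Yt3) := Finset.union_assoc X V Yt3
    rw [← e3]
    exact covering_trans c1 hcov2

end Trans

lemma nth_mem {Y : Finset Ordinal} {i : ℕ} (hi : i < Y.card) : nth Y i ∈ Y := by
  unfold nth
  rw [List.getD_eq_getElem _ _ (by rwa [Finset.length_sort])]
  exact (Finset.mem_sort _).1 (List.getElem_mem _)

section Trans2
variable {ρ : Ordinal} {le1 le2 : Ordinal → Ordinal → Prop}
variable (hρ : AddIndec ρ) (hsys : R2System ρ le1 le2)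
include hρ hsys

lemma le2_trans {a b c : Ordinal} (hab : le2 a b) (hbc : le2 b c) : le2 a c := by
  classical
  obtain ⟨hab', habi, habii⟩ := (hsys.2 a b).1 hab
  obtain ⟨hbc', hbci, hbcii⟩ := (hsys.2 b c).1 hbc
  refine (hsys.2 a c).2 ⟨hab'.trans hbc', ?_, ?_⟩
  · intro X Y hX hY hclX hclY hXY hcof
    exact hbci X Y (fun x hx => (hX x hx).trans_le hab') (fun y hy => (hY y hy).trans_le hab')
      hclX hclY hXY (habi X Y hX hY hclX hclY hXY hcof)
  · intro X Y hX hY hcl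
    set Y₁ := Y.filter (fun y => y < b) with hY₁def
    set Y₂ := Y.filter (fun y => ¬ y < b) with hY₂def
    have hYsplit : Y₁ ∪ Y₂ = Y := Finset.filter_union_filter_not_eq _ Y
    have e1 : (X ∪ Y₁) ∪ Y₂ = X ∪ Y := by rw [Finset.union_assoc, hYsplit]
    have hcl1 : RClosed ρ (↑((X ∪ Y₁) ∪ Y₂) : Set Ordinal) := by rw [e1]; exact hcl
    have hXY₁ : ∀ x ∈ X ∪ Y₁, x < b := by
      intro x hx
      rcases Finset.mem_union.1 hx with hx | hx
      · exact lt_of_lt_of_le (hX x hx) hab'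
      · exact (Finset.mem_filter.1 hx).2
    have hY₂c : ∀ y ∈ Y₂, b ≤ y ∧ y < c := by
      intro y hy
      exact ⟨not_lt.1 (Finset.mem_filter.1 hy).2, (hY y (Finset.mem_filter.1 hy).1).2⟩
    obtain ⟨Yt2, hYt2b, hXY₁lt, hcov1, nth2⟩ := hbcii (X ∪ Y₁) Y₂ hXY₁ hY₂c hcl1
    have hclim : RClosed ρ (↑((X ∪ Y₁) ∪ Yt2) : Set Ordinal) := by
      obtain ⟨h, emb, _, img⟩ := hcov1
      rw [← img]; exact closed_image hρ hcl1 emb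
    have hXY₁Y₂lt : ∀ x ∈ X ∪ Y₁, ∀ y ∈ Y₂, x < y := by
      intro x hx y hy
      exact lt_of_lt_of_le (hXY₁ x hx) (hY₂c y hy).1
    have hcard2 : Yt2.card = Y₂.card := by
      obtain ⟨h, emb, _, img⟩ := hcov1
      exact (cover_map_structure emb.1 img hXY₁Y₂lt hXY₁lt).2.1
    set V := (Y₁ ∪ Yt2).filter (fun v => v < a) with hVdef
    set W := (Y₁ ∪ Yt2).filter (fun v => ¬ v < a) with hWdef
    have hVW : V ∪ W = Y₁ ∪ Yt2 := Finset.filter_union_filter_not_eq _ _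
    have hset : (X ∪ V) ∪ W = (X ∪ Y₁) ∪ Yt2 := by
      rw [Finset.union_assoc, hVW, Finset.union_assoc]
    have hcl2 : RClosed ρ (↑((X ∪ V) ∪ W) : Set Ordinal) := by rw [hset]; exact hclim
    have hXV : ∀ x ∈ X ∪ V, x < a := by
      intro x hx
      rcases Finset.mem_union.1 hx with hx | hx
      · exact hX x hx
      · exact (Finset.mem_filter.1 hx).2
    have hY₁b : ∀ y ∈ Y₁ ∪ Yt2, y < b := by
      intro y hy
      rcases Finset.mem_union.1 hy with hy | hy
      · exact (Finset.mem_filter.1 hy).2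
      · exact hYt2b y hy
    have hWc : ∀ w ∈ W, a ≤ w ∧ w < b := by
      intro w hw
      exact ⟨not_lt.1 (Finset.mem_filter.1 hw).2, hY₁b w (Finset.mem_filter.1 hw).1⟩
    obtain ⟨Yt3, hYt3a, hXVlt, hcov2, nth3⟩ := habii (X ∪ V) W hXV hWc hcl2
    have hXVWlt : ∀ x ∈ X ∪ V, ∀ y ∈ W, x < y := by
      intro x hx y hy
      exact lt_of_lt_of_le (hXV x hx) (hWc y hy).1
    have hcard3 : Yt3.card = W.card := by
      obtain ⟨h, emb, _, img⟩ := hcov2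
      exact (cover_map_structure emb.1 img hXVWlt hXVlt).2.1
    have hVltW : ∀ v ∈ V, ∀ w ∈ W, v < w := by
      intro v hv w hw
      exact lt_of_lt_of_le (Finset.mem_filter.1 hv).2 (hWc w hw).1
    have hVltYt3 : ∀ v ∈ V, ∀ w ∈ Yt3, v < w := by
      intro v hv w hw
      exact hXVlt v (Finset.mem_union_right _ hv) w hw
    refine ⟨V ∪ Yt3, ?_, ?_, ?_, ?_⟩
    · intro y hy
      rcases Finset.mem_union.1 hy with hy | hy
      · exact (Finset.mem_filter.1 hy).2
      · exact hYt3a y hy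
    · intro x hx y hy
      rcases Finset.mem_union.1 hy with hy | hy
      · rcases Finset.mem_union.1 (Finset.mem_filter.1 hy).1 with hy' | hy'
        · exact lt_of_lt_of_le (hX x hx) (hY _ (Finset.mem_filter.1 hy').1).1
        · exact hXY₁lt x (Finset.mem_union_left _ hx) y hy'
      · exact hXVlt x (Finset.mem_union_left _ hx) y hy
    · have c1 : IsCovering ρ le1 le2 (↑(X ∪ Y) : Set Ordinal) (↑((X ∪ V) ∪ W) : Set Ordinal) := by
        rw [hset]; rw [← e1]; exact hcov1
      rw [← Finset.union_assoc]
      exact covering_trans c1 hcov2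
    · -- the nth condition
      intro i hi hle1c
      have hdich : V = ∅ ∨ Y₁ = ∅ := by
        by_cases hV : V = ∅
        · exact Or.inl hV
        · right
          obtain ⟨v, hv⟩ := Finset.nonempty_iff_ne_empty.2 hV
          have hva : v < a := (Finset.mem_filter.1 hv).2
          rcases Finset.mem_union.1 (Finset.mem_filter.1 hv).1 with hv1 | hv2
          · exact absurd hva (not_lt.2 (hY _ (Finset.mem_filter.1 hv1).1).1)
          · rw [Finset.eq_empty_iff_forall_notMem]
            intro y hy
            have h1 : y < v := hXY₁lt y (Finset.mem_union_right _ hy) v hv2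
            have h2 : a ≤ y := (hY y (Finset.mem_filter.1 hy).1).1
            exact absurd (h1.trans hva) (not_lt.2 h2)
      rcases hdich with hVe | hY₁e
      · -- V = ∅ : Yt2's pulled set W = Y₁ ∪ Yt2, final set is Yt3
        have hWeq : W = Y₁ ∪ Yt2 := by rw [← hVW, hVe, Finset.empty_union]
        have hfin : V ∪ Yt3 = Yt3 := by rw [hVe, Finset.empty_union]
        rw [hfin]
        have hY₁ltY₂ : ∀ x ∈ Y₁, ∀ y ∈ Y₂, x < y := by
          intro x hx y hy
          exact lt_of_lt_of_le (Finset.mem_filter.1 hx).2 (hY₂c y hy).1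
        have hY₁ltYt2 : ∀ x ∈ Y₁, ∀ y ∈ Yt2, x < y := by
          intro x hx y hy
          exact hXY₁lt x (Finset.mem_union_right _ hx) y hy
        have hYcard : Y.card = Y₁.card + Y₂.card := by
          rw [← hYsplit]; exact card_union_of_lt hY₁ltY₂
        have hWcard : W.card = Y₁.card + Y₂.card := by
          rw [hWeq, card_union_of_lt hY₁ltYt2, hcard2]
        have hiW : i < W.card := by rw [hWcard]; rwa [hYcard] at hi
        apply nth3 i hiW
        -- need : le1 (nth W i) b
        by_cases hiY₁ : i < Y₁.card
        · have e4 : nth W i = nth Y₁ i := by rw [hWeq, nth_union_left hY₁ltYt2 hiY₁]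
          have e5 : nth Y i = nth Y₁ i := by
            rw [← hYsplit, nth_union_left hY₁ltY₂ hiY₁]
          rw [e4]
          rw [e5] at hle1c
          have hmem : nth Y₁ i ∈ Y₁ := nth_mem hiY₁
          exact le1_resp_le hsys (le_of_lt (Finset.mem_filter.1 hmem).2) hbc' hle1c
        · push_neg at hiY₁
          have hj : i - Y₁.card < Y₂.card := by omega
          have e4 : nth W i = nth Yt2 (i - Y₁.card) := by
            rw [hWeq, nth_union_right hY₁ltYt2 hiY₁]
          have e5 : nth Y i = nth Y₂ (i - Y₁.card) := by
            rw [← hYsplit, nth_union_right hY₁ltY₂ hiY₁]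
          rw [e4]
          rw [e5] at hle1c
          exact nth2 _ hj hle1c
      · -- Y₁ = ∅ : Y = Y₂, Yt2 = V ∪ W
        have hYeq : Y = Y₂ := by rw [← hYsplit, hY₁e, Finset.empty_union]
        have hYt2eq : Yt2 = V ∪ W := by rw [hVW, hY₁e, Finset.empty_union]
        have hiY₂ : i < Y₂.card := by rwa [← hYeq]
        have hle1c' : le1 (nth Y₂ i) c := by rwa [← hYeq]
        have hnth2 := nth2 i hiY₂ hle1c'
        have hiVW : i < V.card + W.card := by
          have : Yt2.card = V.card + W.card := by
            rw [hYt2eq, card_union_of_lt hVltW]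
          rw [← this, hcard2]; exact hiY₂
        by_cases hiV : i < V.card
        · have e4 : nth Yt2 i = nth V i := by rw [hYt2eq, nth_union_left hVltW hiV]
          have e5 : nth (V ∪ Yt3) i = nth V i := nth_union_left hVltYt3 hiV
          rw [e5]
          rw [e4] at hnth2
          have hmem : nth V i ∈ V := nth_mem hiV
          exact le1_resp_le hsys (le_of_lt (Finset.mem_filter.1 hmem).2) hab' hnth2
        · push_neg at hiV
          have hj : i - V.card < W.card := by omega
          have e4 : nth Yt2 i = nth W (i - V.card) := by
            rw [hYt2eq, nth_union_right hVltW hiV]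
          have e5 : nth (V ∪ Yt3) i = nth Yt3 (i - V.card) := nth_union_right hVltYt3 hiV
          rw [e5]
          rw [e4] at hnth2
          exact nth3 _ hj hnth2

end Trans2

section Resp2
variable {ρ : Ordinal} {le1 le2 : Ordinal → Ordinal → Prop}
variable (hρ : AddIndec ρ) (hsys : R2System ρ le1 le2)
include hρ hsys

lemma le2_resp {a b c : Ordinal} (hab1 : le1 a b) (hbc1 : le1 b c) (hac2 : le2 a c) :
    le2 a b := by
  classical
  have hab' := le1_le hsys hab1
  have hbc' := le1_le hsys hbc1
  obtain ⟨hac', haci, hacii⟩ := (hsys.2 a c).1 hac2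
  obtain ⟨_, hcovbc⟩ := (hsys.1 b c).1 hbc1
  refine (hsys.2 a b).2 ⟨hab', ?_, ?_⟩
  · -- part (i)
    intro X Y hX hY hclX hclY hXY hcof
    have hcofc := haci X Y hX hY hclX hclY hXY hcof
    intro b' hb'
    obtain ⟨Ytc, hYtc, hcovc⟩ := hcofc b' (hb'.trans_le hbc')
    have hclXY : RClosed ρ (↑(X ∪ Y) : Set Ordinal) := by
      rw [Finset.coe_union]; exact rclosed_union hclX hclY
    have hclim : RClosed ρ (↑(X ∪ Ytc) : Set Ordinal) := by
      obtain ⟨h, emb, _, img⟩ := hcovc; rw [← img]; exact closed_image hρ hclXY emb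
    set V := Ytc.filter (fun v => v < b) with hVdef
    set W := Ytc.filter (fun v => ¬ v < b) with hWdef
    have hVW : V ∪ W = Ytc := Finset.filter_union_filter_not_eq _ _
    set X₁ : Finset Ordinal := (X ∪ {ρ * (b' / ρ), b'}) ∪ V with hX₁def
    have hE : (↑(X₁ ∪ W) : Set Ordinal) = (↑(X ∪ Ytc) : Set Ordinal) ∪ {ρ * (b' / ρ), b'} := by
      ext x
      have hVWx : x ∈ Ytc ↔ (x ∈ V ∨ x ∈ W) := by rw [← hVW, Finset.mem_union]
      simp only [hX₁def, Finset.coe_union, Set.mem_union, Finset.mem_coe,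
        Finset.mem_union, Finset.mem_insert, Finset.mem_singleton,
        Set.mem_insert_iff, Set.mem_singleton_iff]
      rw [hVWx]
      tauto
    have hclX₁W : RClosed ρ (↑(X₁ ∪ W) : Set Ordinal) := by
      rw [hE]; exact rclosed_insert_pair hρ hclim b'
    have hX₁b : ∀ x ∈ X₁, x < b := by
      intro x hx
      rcases Finset.mem_union.1 hx with hx | hx
      · rcases Finset.mem_union.1 hx with hx | hx
        · exact lt_of_lt_of_le (hX x hx) hab'
        · rcases Finset.mem_insert.1 hx with rfl | hx
          · exact lt_of_le_of_lt (Ordinal.mul_div_le b' ρ) hb'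
          · rw [Finset.mem_singleton.1 hx]; exact hb'
      · exact (Finset.mem_filter.1 hx).2
    have hWc : ∀ w ∈ W, b ≤ w ∧ w < c := by
      intro w hw
      exact ⟨not_lt.1 (Finset.mem_filter.1 hw).2, (hYtc w (Finset.mem_filter.1 hw).1).2⟩
    obtain ⟨Wt, hWtb, hX₁lt, hcovW⟩ := hcovbc X₁ W hX₁b hWc hclX₁W
    obtain ⟨h₁, emb₁, pres₁, img₁⟩ := hcovW
    have hX₁Wlt : ∀ x ∈ X₁, ∀ w ∈ W, x < w := by
      intro x hx w hw
      exact lt_of_lt_of_le (hX₁b x hx) (hWc w hw).1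
    have hfix : ∀ x ∈ X₁, h₁ x = x :=
      (cover_map_structure emb₁.1 img₁ hX₁Wlt hX₁lt).1
    have hb'X₁ : b' ∈ X₁ := by
      apply Finset.mem_union_left
      apply Finset.mem_union_right
      exact Finset.mem_insert.2 (Or.inr (Finset.mem_singleton.2 rfl))
    have hYtcsub : ∀ v ∈ Ytc, v ∈ X₁ ∪ W := by
      intro v hv
      rcases Finset.mem_union.1 (hVW ▸ hv : v ∈ V ∪ W) with hv | hv
      · exact Finset.mem_union_left _ (Finset.mem_union_right _ hv)
      · exact Finset.mem_union_right _ hv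
    have hmemXW : ∀ v ∈ Ytc, (v : Ordinal) ∈ (↑(X₁ ∪ W) : Set Ordinal) :=
      fun v hv => Finset.mem_coe.2 (hYtcsub v hv)
    have hb'mem : (b' : Ordinal) ∈ (↑(X₁ ∪ W) : Set Ordinal) :=
      Finset.mem_coe.2 (Finset.mem_union_left _ hb'X₁)
    refine ⟨Ytc.image h₁, ?_, ?_⟩
    · intro y hy
      obtain ⟨v, hv, rfl⟩ := Finset.mem_image.1 hy
      refine ⟨?_, ?_⟩
      · have h1 := emb₁.1 b' hb'mem v (hmemXW v hv) (hYtc v hv).1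
        rwa [hfix b' hb'X₁] at h1
      · have h2 : h₁ v ∈ (↑(X₁ ∪ Wt) : Set Ordinal) := img₁ ▸ ⟨v, hmemXW v hv, rfl⟩
        rcases Finset.mem_union.1 (Finset.mem_coe.1 h2) with h2' | h2'
        · exact hX₁b _ h2'
        · exact hWtb _ h2'
    · apply covering_trans hcovc
      refine covering_subset ?_ emb₁ pres₁ ?_
      · intro x hx
        have hx' : x ∈ X ∪ Ytc := Finset.mem_coe.1 hx
        apply Finset.mem_coe.2
        rcases Finset.mem_union.1 hx' with hx'' | hx''
        · exact Finset.mem_union_left _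
            (Finset.mem_union_left _ (Finset.mem_union_left _ hx''))
        · exact hYtcsub x hx''
      · rw [Finset.coe_union, Set.image_union, Finset.coe_union, Finset.coe_image]
        congr 1
        ext x
        simp only [Set.mem_image, Finset.mem_coe]
        constructor
        · rintro ⟨v, hv, rfl⟩
          rwa [hfix v (Finset.mem_union_left _ (Finset.mem_union_left _ hv))]
        · intro hx
          exact ⟨x, hx, hfix x (Finset.mem_union_left _ (Finset.mem_union_left _ hx))⟩
  · -- part (ii)
    intro X Y hX hY hcl
    obtain ⟨Yt, h1, h2, h3, h4⟩ := hacii X Y hX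
      (fun y hy => ⟨(hY y hy).1, (hY y hy).2.trans_le hbc'⟩) hcl
    exact ⟨Yt, h1, h2, h3, fun i hi hle => h4 i hi (le1_trans hρ hsys hle hbc1)⟩

end Resp2

theorem partial_orders_and_respect
    (ρ : Ordinal) (hρ : AddIndec ρ)
    (le1 le2 : Ordinal → Ordinal → Prop) (hsys : R2System ρ le1 le2)
    :
    (∀ a : Ordinal, le1 a a) ∧
    (∀ a b : Ordinal, le1 a b → le1 b a → a = b) ∧
    (∀ a b c : Ordinal, le1 a b → le1 b c → le1 a c) ∧
    (∀ a : Ordinal, le2 a a) ∧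
    (∀ a b : Ordinal, le2 a b → le2 b a → a = b) ∧
    (∀ a b c : Ordinal, le2 a b → le2 b c → le2 a c) ∧
    (∀ a b : Ordinal, le1 a b → a ≤ b) ∧
    (∀ a b c : Ordinal, a ≤ b → b ≤ c → le1 a c → le1 a b) ∧
    (∀ a b : Ordinal, le2 a b → le1 a b) ∧
    (∀ a b c : Ordinal, le1 a b → le1 b c → le2 a c → le2 a b) :=
  ⟨le1_refl hsys, fun _ _ h1 h2 => le1_antisymm hsys h1 h2,
    fun _ _ _ h1 h2 => le1_trans hρ hsys h1 h2,
    le2_refl hsys, fun _ _ h1 h2 => le2_antisymm hsys h1 h2,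
    fun _ _ _ h1 h2 => le2_trans hρ hsys h1 h2,
    fun _ _ h => le1_le hsys h,
    fun _ _ _ h1 h2 h3 => le1_resp_le hsys h1 h2 h3,
    fun _ _ h => le2_le1 hsys h,
    fun _ _ _ h1 h2 h3 => le2_resp hρ hsys h1 h2 h3⟩
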